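/- Fix ζ ∈ ℤ² \ {0} and 0 < δ < 1/4, and let λ > 0 with λ^δ ≥ 4|ζ|². Suppose ξ ∈ ℤ² satisfies |⟨ξ, ζ⟩| > 2|ξ|^{2δ} and ||ξ|² − λ| ≤ λ^δ. Then ||ξ + ζ|² − λ| > λ^δ. -/
import Mathlib


open Real

/-- If λ^δ ≥ 4|ζ|², ξ ∉ S_ζ (i.e. |⟨ξ,ζ⟩| > 2|ξ|^{2δ}) and ||ξ|² − λ| ≤ λ^δ,
then ||ξ+ζ|² − λ| > λ^δ. -/
theorem shifted_norm_far (δ : ℝ) (hδ0 : 0 < δ) (hδ : δ < 1/4)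
    (lam : ℝ) (hlam : 0 < lam) (ζ ξ : ℤ × ℤ) (hζ : ζ ≠ 0)
    (hbig : 4 * ((ζ.1 ^ 2 + ζ.2 ^ 2 : ℤ) : ℝ) ≤ lam ^ δ)
    (hip : 2 * ((ξ.1 ^ 2 + ξ.2 ^ 2 : ℤ) : ℝ) ^ δ < |((ξ.1 * ζ.1 + ξ.2 * ζ.2 : ℤ) : ℝ)|)
    (hnear : |((ξ.1 ^ 2 + ξ.2 ^ 2 : ℤ) : ℝ) - lam| ≤ lam ^ δ) :
    lam ^ δ < |(((ξ.1 + ζ.1) ^ 2 + (ξ.2 + ζ.2) ^ 2 : ℤ) : ℝ) - lam| := by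
  set N : ℝ := ((ξ.1 ^ 2 + ξ.2 ^ 2 : ℤ) : ℝ) with hN
  set Z : ℝ := ((ζ.1 ^ 2 + ζ.2 ^ 2 : ℤ) : ℝ) with hZ
  set P : ℝ := ((ξ.1 * ζ.1 + ξ.2 * ζ.2 : ℤ) : ℝ) with hP
  -- Z ≥ 1
  have hZ1 : (1 : ℝ) ≤ Z := by
    have hne : ζ.1 ≠ 0 ∨ ζ.2 ≠ 0 := by
      by_contra h
      push_neg at h
      exact hζ (Prod.ext h.1 h.2)
    have hint : (1 : ℤ) ≤ ζ.1 ^ 2 + ζ.2 ^ 2 := by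
      rcases hne with h | h
      · have h1 := Int.one_le_abs (by simpa using h)
        nlinarith [sq_abs ζ.1, sq_nonneg ζ.2, abs_nonneg ζ.1]
      · have h1 := Int.one_le_abs (by simpa using h)
        nlinarith [sq_abs ζ.2, sq_nonneg ζ.1, abs_nonneg ζ.2]
    rw [hZ]
    exact_mod_cast hint
  have hl4 : (4 : ℝ) ≤ lam ^ δ := by nlinarith
  -- lam ≥ 1
  have hlam1 : (1 : ℝ) ≤ lam := by
    by_contra h
    push_neg at h
    have : lam ^ δ < 1 := Real.rpow_lt_one hlam.le h hδ0
    linarith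
  -- lam ^ δ ≤ lam ^ (1/4)
  have hld : lam ^ δ ≤ lam ^ (1/4 : ℝ) :=
    Real.rpow_le_rpow_of_exponent_le hlam1 hδ.le
  set t : ℝ := lam ^ (1/4 : ℝ) with ht
  have ht4 : (4 : ℝ) ≤ t := le_trans hl4 hld
  have htlam : t ^ (4 : ℕ) = lam := by
    rw [ht, ← Real.rpow_natCast (lam ^ (1/4 : ℝ)) 4, ← Real.rpow_mul hlam.le]
    norm_num
  -- lam ^ δ ≤ lam / 64
  have hsmall : lam ^ δ ≤ lam / 64 := by
    have hc : (64 : ℝ) ≤ t ^ 3 := by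
      calc (64 : ℝ) = 4 ^ 3 := by norm_num
        _ ≤ t ^ 3 := pow_le_pow_left₀ (by norm_num) ht4 3
    have ht0 : (0 : ℝ) < t := by linarith
    have h64 : 64 * t ≤ lam := by rw [← htlam]; nlinarith
    linarith
  -- N ≥ 63/64 * lam
  have hNlow : 63 / 64 * lam ≤ N := by
    have := abs_le.mp hnear
    linarith [this.1]
  have hNpos : (0 : ℝ) ≤ 63 / 64 * lam := by positivity
  -- N ^ δ ≥ (63/64) * lam ^ δ
  have hNd : 63 / 64 * lam ^ δ ≤ N ^ δ := by
    have h1 : ((63 : ℝ) / 64 * lam) ^ δ ≤ N ^ δ :=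
      Real.rpow_le_rpow hNpos hNlow hδ0.le
    have h2 : ((63 : ℝ) / 64 * lam) ^ δ = (63 / 64 : ℝ) ^ δ * lam ^ δ :=
      Real.mul_rpow (by norm_num) hlam.le
    have h3 : (63 / 64 : ℝ) ≤ (63 / 64 : ℝ) ^ δ := by
      have := Real.rpow_le_rpow_of_exponent_ge (x := (63/64 : ℝ)) (by norm_num)
        (by norm_num) (by linarith : δ ≤ 1)
      simpa using this
    have hlδ : (0 : ℝ) ≤ lam ^ δ := (Real.rpow_pos_of_pos hlam δ).le
    nlinarith
  -- key: 2|P| > 4 N^δ ≥ 63/16 λ^δ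
  have hP4 : 63 / 16 * lam ^ δ < 2 * |P| := by
    have : 4 * (63 / 64 * lam ^ δ) ≤ 4 * N ^ δ := by linarith
    linarith
  -- expansion
  have hexp : (((ξ.1 + ζ.1) ^ 2 + (ξ.2 + ζ.2) ^ 2 : ℤ) : ℝ) - lam
      = 2 * P + ((N - lam) + Z) := by
    rw [hN, hP, hZ]; push_cast; ring
  rw [hexp]
  have key : |2 * P| ≤ |2 * P + ((N - lam) + Z)| + (|N - lam| + Z) := by
    have h1 : |2 * P| = |(2 * P + ((N - lam) + Z)) - ((N - lam) + Z)| := by ring_nf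
    have h2 : |(2 * P + ((N - lam) + Z)) - ((N - lam) + Z)|
        ≤ |2 * P + ((N - lam) + Z)| + |(N - lam) + Z| := abs_sub _ _
    have h3 : |(N - lam) + Z| ≤ |N - lam| + |Z| := abs_add_le _ _
    have h4 : |Z| = Z := abs_of_nonneg (by linarith)
    linarith [h1 ▸ h2, h3, h4 ▸ h3]
  have h2P : 2 * |P| = |2 * P| := by rw [abs_mul]; norm_num
  nlinarith [abs_nonneg (2 * P + ((N - lam) + Z))]
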